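/- arXiv:1505.01340 — 6 statements merged into one kernel-verified Lean document; each statement's English description precedes it below -/
import Mathlib

section
/- If A ⊆ ℤ⁺ and the preimage φ⁻¹(n) is disjoint from A for some n, then the upper density of A is at most 1 - 2^(-n). -/
open Filter

/-- The counting sequence #({1,...,N} ∩ A)/N used for natural density. -/
noncomputable def densSeq (A : Set ℕ) (N : ℕ) : ℝ :=
  (Nat.card ↥(A ∩ Set.Icc 1 N) : ℝ) / N

/-- `A` has natural density `r`. -/
def HasDensity (A : Set ℕ) (r : ℝ) : Prop :=
  Filter.Tendsto (densSeq A) Filter.atTop (nhds r)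

/-- `phi n` is the largest `k` such that `2^(k-1)` divides `n` (for `n ≥ 1`),
i.e. the 2-adic valuation of `n` plus one. -/
def phi (n : ℕ) : ℕ := padicValNat 2 n + 1

/-- A set of positive integers is almost decidable if some computable set of
natural density one intersects it in a computable set. -/
def AlmostDecidable (S : Set ℕ) : Prop :=
  ∃ R : Set ℕ, ComputablePred (· ∈ R) ∧ HasDensity R 1 ∧
    ComputablePred (fun x => x ∈ R ∧ x ∈ S)

/-- A (Turing) universal partially computable unary function. -/
def Universal (U : ℕ →. ℕ) : Prop :=
  Partrec U ∧ ∃ C : ℕ → ℕ → ℕ, Computable₂ C ∧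
    ∀ F : ℕ →. ℕ, Partrec F → ∃ g : ℕ, ∀ x, 1 ≤ x → U (C g x) = F x

theorem stmt_4 (A : Set ℕ) (n : ℕ) (hn : 1 ≤ n)
    (hdisj : {k : ℕ | 1 ≤ k ∧ phi k = n} ∩ A = ∅) :
    Filter.limsup (densSeq A) Filter.atTop ≤ 1 - ((2 : ℝ) ^ n)⁻¹ := by
  have h2 : (0:ℝ) < 2 ^ n := by positivity
  have h2le : ((2:ℝ)^n)⁻¹ ≤ 1 := by
    rw [inv_le_one_iff₀]; right; exact one_le_pow₀ one_le_two
  have hnn : ∀ N, 0 ≤ densSeq A N := by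
    intro N; unfold densSeq; positivity
  have key : ∀ N : ℕ, densSeq A N ≤ 1 - ((2:ℝ)^n)⁻¹ + 1 / N := by
    intro N
    rcases Nat.eq_zero_or_pos N with h | hN
    · subst h
      simp [densSeq]
      linarith [h2le]
    · set t := N / 2^n with ht
      set f : ℕ → ℕ := fun j => 2^(n-1) * (2*j+1) with hf
      have hfinI : (Set.Icc 1 N).Finite := Set.finite_Icc _ _
      have hmaps : ∀ j, j < t → f j ∈ Set.Icc 1 N ∩ {k : ℕ | 1 ≤ k ∧ phi k = n} := by
        intro j hj
        have hpos : 0 < f j := by simp [hf]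
        have hle : f j ≤ N := by
          have h1 : 2*j+1 < 2*t := by omega
          have h2' : 2^(n-1) * (2*j+1) < 2^(n-1) * (2*t) :=
            Nat.mul_lt_mul_of_pos_left h1 (Nat.pow_pos two_pos)
          have h3 : 2^(n-1) * (2*t) = 2^n * t := by
            rw [← mul_assoc, mul_comm (2^(n-1)) 2, ← pow_succ', Nat.sub_add_cancel hn]
          have h4 : 2^n * t ≤ N := by
            rw [mul_comm]; exact Nat.div_mul_le_self N (2^n)
          calc f j = 2^(n-1) * (2*j+1) := rfl
            _ ≤ 2^(n-1) * (2*t) := le_of_lt h2'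
            _ = 2^n * t := h3
            _ ≤ N := h4
        have hphi : phi (f j) = n := by
          unfold phi
          have hodd : ¬ (2 ∣ (2*j+1)) := by omega
          have hv1 : padicValNat 2 (2^(n-1)) = n-1 := padicValNat.prime_pow _
          have hv2 : padicValNat 2 (2*j+1) = 0 := padicValNat.eq_zero_of_not_dvd hodd
          rw [hf]
          rw [padicValNat.mul (by positivity) (by omega), hv1, hv2]
          omega
        exact ⟨⟨hpos, hle⟩, hpos, hphi⟩
      have hinj : Function.Injective f := by
        intro a b hab
        simp only [hf] at hab
        have := Nat.eq_of_mul_eq_mul_left (Nat.pow_pos two_pos) hab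
        omega
      have hlower : t ≤ (Set.Icc 1 N ∩ {k : ℕ | 1 ≤ k ∧ phi k = n}).ncard := by
        have hcard : ((Finset.range t).image f).card = t := by
          rw [Finset.card_image_of_injective _ hinj, Finset.card_range]
        calc t = (((Finset.range t).image f : Finset ℕ) : Set ℕ).ncard := by
                rw [Set.ncard_coe_finset, hcard]
          _ ≤ _ := by
                apply Set.ncard_le_ncard ?_ (hfinI.inter_of_left _)
                intro x hx
                simp only [Finset.coe_image, Set.mem_image, Finset.mem_coe,
                  Finset.mem_range] at hx
                obtain ⟨j, hj, rfl⟩ := hx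
                exact hmaps j hj
      have hsub : A ∩ Set.Icc 1 N ⊆ Set.Icc 1 N \ {k : ℕ | 1 ≤ k ∧ phi k = n} := by
        rintro x ⟨hxA, hxI⟩
        refine ⟨hxI, fun hxB => ?_⟩
        have : x ∈ {k : ℕ | 1 ≤ k ∧ phi k = n} ∩ A := ⟨hxB, hxA⟩
        rw [hdisj] at this; exact this
      have hIccN : (Set.Icc 1 N).ncard = N := by
        rw [← Finset.coe_Icc, Set.ncard_coe_finset, Nat.card_Icc]; omega
      have hdiff : (Set.Icc 1 N \ {k : ℕ | 1 ≤ k ∧ phi k = n}).ncard ≤ N - t := by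
        have heq : Set.Icc 1 N \ {k : ℕ | 1 ≤ k ∧ phi k = n}
            = Set.Icc 1 N \ (Set.Icc 1 N ∩ {k : ℕ | 1 ≤ k ∧ phi k = n}) := by
          rw [Set.diff_self_inter]
        rw [heq, Set.ncard_diff Set.inter_subset_left (hfinI.inter_of_left _), hIccN]
        omega
      have hcardA : Nat.card ↥(A ∩ Set.Icc 1 N) ≤ N - t := by
        calc Nat.card ↥(A ∩ Set.Icc 1 N) = (A ∩ Set.Icc 1 N).ncard :=
              Nat.card_coe_set_eq _
          _ ≤ _ := Set.ncard_le_ncard hsub hfinI.diff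
          _ ≤ N - t := hdiff
      have htN : t ≤ N := Nat.div_le_self _ _
      have hNR : (0:ℝ) < N := by exact_mod_cast hN
      have htR : (N:ℝ) / 2^n - 1 ≤ (t:ℝ) := by
        have h1 : 2^n * t + N % 2^n = N := Nat.div_add_mod N (2^n)
        have h2' : N % 2^n < 2^n := Nat.mod_lt _ (Nat.pow_pos two_pos)
        have h3 : (N:ℝ) < 2^n * t + 2^n := by
          have := (Nat.cast_lt (α := ℝ)).2 (by omega : N < 2^n * t + 2^n)
          push_cast at this; linarith
        rw [sub_le_iff_le_add, div_le_iff₀ h2]; nlinarith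
      have hcast : (Nat.card ↥(A ∩ Set.Icc 1 N) : ℝ) ≤ (N:ℝ) - t := by
        have : ((N - t : ℕ) : ℝ) = (N:ℝ) - t := by
          push_cast [Nat.cast_sub htN]; ring
        calc (Nat.card ↥(A ∩ Set.Icc 1 N) : ℝ) ≤ ((N - t : ℕ) : ℝ) := by
              exact_mod_cast hcardA
          _ = _ := this
      have hfinal : densSeq A N ≤ ((N:ℝ) - ((N:ℝ)/2^n - 1)) / N := by
        unfold densSeq
        gcongr
        linarith
      calc densSeq A N ≤ ((N:ℝ) - ((N:ℝ)/2^n - 1)) / N := hfinal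
        _ = 1 - ((2:ℝ)^n)⁻¹ + 1 / N := by field_simp; ring
  have hlim : Tendsto (fun N : ℕ => 1 - ((2:ℝ)^n)⁻¹ + 1 / N) atTop
      (nhds (1 - ((2:ℝ)^n)⁻¹)) := by
    have h0 : Tendsto (fun N : ℕ => 1 / (N:ℝ)) atTop (nhds 0) :=
      tendsto_one_div_atTop_nhds_zero_nat
    simpa using tendsto_const_nhds.add h0
  calc Filter.limsup (densSeq A) Filter.atTop
      ≤ limsup (fun N : ℕ => 1 - ((2:ℝ)^n)⁻¹ + 1 / N) atTop := by
        refine limsup_le_limsup (Eventually.of_forall key) ?_ ?_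
        · exact isCoboundedUnder_le_of_le atTop hnn
        · exact hlim.isBoundedUnder_le
    _ = 1 - ((2:ℝ)^n)⁻¹ := hlim.limsup_eq
end

section
/- There exist infinitely many universal partially computable functions U : ℤ⁺ → ℤ⁺ whose halting set dom(U) has natural density 1 and is almost decidable: namely, if V is universal, then U defined by U(x) = V(y) if x = y² and U(x) = 0 otherwise, is universal, dom(U) is generic, and the set of non-squares is a generic decidable set whose intersection with dom(U) is decidable. -/
open Filter

/- auxiliary lemmas -/

lemma sq_iff (x : ℕ) : (∃ y : ℕ, y * y = x) ↔ Nat.sqrt x * Nat.sqrt x = x := by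
  constructor
  · rintro ⟨y, rfl⟩; rw [Nat.sqrt_eq]
  · intro h; exact ⟨_, h⟩

lemma two_not_sq : ¬ (Nat.sqrt 2 * Nat.sqrt 2 = 2) := by
  intro h
  obtain ⟨y, hy⟩ : ∃ y : ℕ, y * y = 2 := ⟨_, h⟩
  rcases y with _ | _ | y
  · omega
  · omega
  · nlinarith

lemma compPred_sq : ComputablePred (fun x : ℕ => Nat.sqrt x * Nat.sqrt x = x) :=
  ⟨inferInstance,
    (PrimrecRel.comp Primrec.eq (Primrec.nat_mul.comp Primrec.nat_sqrt Primrec.nat_sqrt)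
      Primrec.id).decide.to_comp⟩

lemma ncard_lower {A : Set ℕ} (h : ∀ x, 1 ≤ x → Nat.sqrt x * Nat.sqrt x ≠ x → x ∈ A) (N : ℕ) :
    N - Nat.sqrt N ≤ (A ∩ Set.Icc 1 N).ncard := by
  have hfin : (A ∩ Set.Icc 1 N).Finite := (Set.finite_Icc 1 N).inter_of_right A
  have hfin2 : ((fun y : ℕ => y * y) '' Set.Icc 1 (Nat.sqrt N)).Finite :=
    (Set.finite_Icc _ _).image _
  have hsub : Set.Icc 1 N ⊆ (A ∩ Set.Icc 1 N) ∪ ((fun y : ℕ => y * y) '' Set.Icc 1 (Nat.sqrt N)) := by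
    intro x hx
    rw [Set.mem_Icc] at hx
    by_cases hs : Nat.sqrt x * Nat.sqrt x = x
    · right
      refine ⟨Nat.sqrt x, ?_, hs⟩
      rw [Set.mem_Icc]
      refine ⟨?_, Nat.sqrt_le_sqrt hx.2⟩
      rcases Nat.eq_zero_or_pos (Nat.sqrt x) with h0 | h0
      · rw [h0] at hs; omega
      · exact h0
    · exact Or.inl ⟨h x hx.1 hs, Set.mem_Icc.2 hx⟩
  have h1 : (Set.Icc 1 N).ncard = N := by
    rw [← Finset.coe_Icc, Set.ncard_coe_finset, Nat.card_Icc]; omega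
  have h2 : ((fun y : ℕ => y * y) '' Set.Icc 1 (Nat.sqrt N)).ncard ≤ Nat.sqrt N := by
    calc ((fun y : ℕ => y * y) '' Set.Icc 1 (Nat.sqrt N)).ncard
        ≤ (Set.Icc 1 (Nat.sqrt N)).ncard := Set.ncard_image_le (Set.finite_Icc _ _)
      _ = Nat.sqrt N := by rw [← Finset.coe_Icc, Set.ncard_coe_finset, Nat.card_Icc]; omega
  have h3 : (Set.Icc 1 N).ncard ≤ (A ∩ Set.Icc 1 N).ncard +
      ((fun y : ℕ => y * y) '' Set.Icc 1 (Nat.sqrt N)).ncard :=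
    le_trans (Set.ncard_le_ncard hsub (hfin.union hfin2)) (Set.ncard_union_le _ _)
  omega

lemma sqrt_tendsto : Tendsto (fun N : ℕ => (Nat.sqrt N : ℝ) / N) atTop (nhds 0) := by
  have h1 : Tendsto (fun N : ℕ => ((Nat.sqrt N : ℝ))⁻¹) atTop (nhds 0) := by
    apply tendsto_inv_atTop_zero.comp
    apply tendsto_natCast_atTop_atTop.comp
    apply tendsto_atTop_atTop.2
    intro b
    exact ⟨b * b, fun n hn => le_trans (le_of_eq (Nat.sqrt_eq b).symm) (Nat.sqrt_le_sqrt hn)⟩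
  apply tendsto_of_tendsto_of_tendsto_of_le_of_le' tendsto_const_nhds h1
  · filter_upwards with N
    positivity
  · filter_upwards [eventually_ge_atTop 1] with N hN
    have hs1 : 1 ≤ Nat.sqrt N := by
      rw [Nat.le_sqrt]; omega
    have hs1' : (0:ℝ) < (Nat.sqrt N : ℝ) := by exact_mod_cast hs1
    have hN' : (0:ℝ) < (N : ℝ) := by exact_mod_cast hN
    rw [inv_eq_one_div, div_le_div_iff₀ hN' hs1', one_mul]
    exact_mod_cast Nat.sqrt_le N

lemma hasDensity_one {A : Set ℕ} (h : ∀ x, 1 ≤ x → Nat.sqrt x * Nat.sqrt x ≠ x → x ∈ A) :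
    HasDensity A 1 := by
  have key : ∀ N : ℕ, 1 ≤ N → 1 - (Nat.sqrt N : ℝ) / N ≤ densSeq A N ∧ densSeq A N ≤ 1 := by
    intro N hN
    have hN' : (0:ℝ) < (N : ℝ) := by exact_mod_cast hN
    have hcard : Nat.card ↥(A ∩ Set.Icc 1 N) = (A ∩ Set.Icc 1 N).ncard :=
      Nat.card_coe_set_eq _
    have hle : (A ∩ Set.Icc 1 N).ncard ≤ N := by
      calc (A ∩ Set.Icc 1 N).ncard ≤ (Set.Icc 1 N).ncard :=
            Set.ncard_le_ncard Set.inter_subset_right (Set.finite_Icc _ _)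
        _ = N := by rw [← Finset.coe_Icc, Set.ncard_coe_finset, Nat.card_Icc]; omega
    have hge := ncard_lower h N
    constructor
    · rw [densSeq, hcard, le_div_iff₀ hN', sub_mul, one_mul, div_mul_cancel₀ _ hN'.ne']
      have : ((N - Nat.sqrt N : ℕ) : ℝ) ≤ ((A ∩ Set.Icc 1 N).ncard : ℝ) := by exact_mod_cast hge
      rw [Nat.cast_sub (Nat.sqrt_le_self N)] at this
      linarith
    · rw [densSeq, hcard, div_le_one hN']
      exact_mod_cast hle
  have hlow : Tendsto (fun N : ℕ => 1 - (Nat.sqrt N : ℝ) / N) atTop (nhds 1) := by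
    simpa using tendsto_const_nhds.sub sqrt_tendsto
  apply tendsto_of_tendsto_of_tendsto_of_le_of_le' hlow tendsto_const_nhds
  · filter_upwards [eventually_ge_atTop 1] with N hN
    exact (key N hN).1
  · filter_upwards [eventually_ge_atTop 1] with N hN
    exact (key N hN).2

lemma main (V : ℕ →. ℕ) (hV : Universal V) (k : ℕ) (U : ℕ →. ℕ)
    (hU : ∀ x : ℕ, U x =
      if Nat.sqrt x * Nat.sqrt x = x then V (Nat.sqrt x) else Part.some k) :
    Universal U ∧ HasDensity {x : ℕ | 1 ≤ x ∧ (U x).Dom} 1 ∧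
      ComputablePred (fun x : ℕ => (¬ ∃ y : ℕ, y * y = x) ∧ (U x).Dom) ∧
      AlmostDecidable {x : ℕ | (U x).Dom} := by
  obtain ⟨hVp, C, hC, hCU⟩ := hV
  have hdom : ∀ x : ℕ, Nat.sqrt x * Nat.sqrt x ≠ x → (U x).Dom := by
    intro x hx
    rw [hU x, if_neg hx]
    trivial
  have hUuniv : Universal U := by
    constructor
    · have hc : Computable fun x : ℕ => decide (Nat.sqrt x * Nat.sqrt x = x) :=
        (PrimrecRel.comp Primrec.eq (Primrec.nat_mul.comp Primrec.nat_sqrt Primrec.nat_sqrt)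
          Primrec.id).decide.to_comp
      have := Partrec.cond hc (hVp.comp Primrec.nat_sqrt.to_comp)
        (Partrec.const' (Part.some k))
      apply this.of_eq
      intro x
      rw [hU x]
      by_cases hx : Nat.sqrt x * Nat.sqrt x = x <;> simp [hx]
    · refine ⟨fun g x => C g x * C g x, ?_, ?_⟩
      · exact Primrec.nat_mul.to_comp.comp hC hC
      · intro F hF
        obtain ⟨g, hg⟩ := hCU F hF
        refine ⟨g, fun x hx => ?_⟩
        rw [hU, Nat.sqrt_eq, if_pos rfl, hg x hx]
  have hdens : HasDensity {x : ℕ | 1 ≤ x ∧ (U x).Dom} 1 :=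
    hasDensity_one fun x hx hs => ⟨hx, hdom x hs⟩
  have hint : ComputablePred (fun x : ℕ => (¬ ∃ y : ℕ, y * y = x) ∧ (U x).Dom) := by
    apply compPred_sq.not.of_eq
    intro x
    constructor
    · intro hx
      exact ⟨fun h => hx ((sq_iff x).1 h), hdom x hx⟩
    · intro ⟨hx, _⟩
      exact fun h => hx ⟨_, h⟩
  refine ⟨hUuniv, hdens, hint, ⟨{x | ¬ ∃ y : ℕ, y * y = x}, ?_, ?_, ?_⟩⟩
  · exact compPred_sq.not.of_eq fun x => (not_iff_not.2 (sq_iff x)).symm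
  · exact hasDensity_one fun x _ hs h => hs ((sq_iff x).1 h)
  · exact hint

theorem stmt_7 (V : ℕ →. ℕ) (hV : Universal V) (U : ℕ →. ℕ)
    (hU : ∀ x : ℕ, U x =
      if Nat.sqrt x * Nat.sqrt x = x then V (Nat.sqrt x) else Part.some 0) :
    Universal U ∧
    HasDensity {x : ℕ | 1 ≤ x ∧ (U x).Dom} 1 ∧
    ComputablePred (fun x : ℕ => ¬ ∃ y : ℕ, y * y = x) ∧
    HasDensity {x : ℕ | 1 ≤ x ∧ ¬ ∃ y : ℕ, y * y = x} 1 ∧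
    ComputablePred (fun x : ℕ => (¬ ∃ y : ℕ, y * y = x) ∧ (U x).Dom) ∧
    AlmostDecidable {x : ℕ | (U x).Dom} ∧
    {W : ℕ →. ℕ | Universal W ∧ HasDensity {x : ℕ | 1 ≤ x ∧ (W x).Dom} 1 ∧
      AlmostDecidable {x : ℕ | (W x).Dom}}.Infinite := by
  obtain ⟨h1, h2, h5, h6⟩ := main V hV 0 U hU
  refine ⟨h1, h2, ?_, ?_, h5, h6, ?_⟩
  · exact compPred_sq.not.of_eq fun x => (not_iff_not.2 (sq_iff x)).symm
  · exact hasDensity_one fun x hx hs => ⟨hx, fun h => hs ((sq_iff x).1 h)⟩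
  · refine Set.infinite_of_injective_forall_mem
      (f := fun k : ℕ => fun x : ℕ =>
        if Nat.sqrt x * Nat.sqrt x = x then V (Nat.sqrt x) else Part.some k) ?_ ?_
    · intro a b hab
      have h2' := congrFun hab 2
      simp only [if_neg two_not_sq] at h2'
      exact Part.some_injective h2'
    · intro k
      obtain ⟨ha, hb, _, hd⟩ := main V hV k _ (fun x => rfl)
      exact ⟨ha, hb, hd⟩
end

section
/- Let V be a partially computable function with undecidable halting set, and define U(x) = V(φ(x)) where φ(n) is the largest k with 2^(k-1) ∣ n. Then dom(U) is not almost decidable: there is no computable set S of natural density 1 such that S ∩ dom(U) is computable. -/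
open Filter

/-- A density-one set contains a number of every 2-adic shape `2^n * odd`. -/
lemma density_hits (S : Set ℕ) (hd : HasDensity S 1) (n : ℕ) :
    ∃ y : ℕ, 2 ^ n * (2 * y + 1) ∈ S := by
  by_contra hc
  push_neg at hc
  set P : ℝ := (2:ℝ) ^ (n+1) with hPdef
  have hP : 0 < P := by positivity
  set c : ℝ := P⁻¹ with hcdef
  have hc0 : 0 < c := by positivity
  have hPc : P * c = 1 := mul_inv_cancel₀ (ne_of_gt hP)
  have h1 : ∀ᶠ N in atTop, 1 - c/2 < densSeq S N :=
    hd.eventually (eventually_gt_nhds (by linarith : (1:ℝ) - c/2 < 1))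
  have h2 : ∀ᶠ N : ℕ in atTop, P * 2 < N :=
    (tendsto_natCast_atTop_atTop (R := ℝ)).eventually_gt_atTop _
  obtain ⟨N, hN1, hN2⟩ := (h1.and h2).exists
  set I : Set ℕ := Set.Icc 1 N with hI
  set T : Set ℕ := {x | ∃ y, x = 2 ^ n * (2 * y + 1)} with hT
  set K : ℕ := N / 2 ^ (n+1) with hK
  have h2n : 0 < 2 ^ n := Nat.pow_pos (n := n) (by norm_num)
  have hNpos : 0 < N := by
    rcases Nat.eq_zero_or_pos N with h | h
    · rw [h] at hN2; norm_num at hN2; linarith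
    · exact h
  have hIfin : I.Finite := Set.finite_Icc _ _
  have hTcard : K ≤ (T ∩ I).ncard := by
    have hinj : Set.InjOn (fun y => 2 ^ n * (2 * y + 1)) ↑(Finset.range K) := by
      intro a _ b _ hab
      simp only at hab
      have := Nat.eq_of_mul_eq_mul_left h2n hab
      omega
    have himg : ((Finset.range K).image (fun y => 2 ^ n * (2 * y + 1)) : Set ℕ) ⊆ T ∩ I := by
      intro x hx
      simp only [Finset.coe_image, Set.mem_image, Finset.mem_coe, Finset.mem_range] at hx
      obtain ⟨y, hy, rfl⟩ := hx
      refine ⟨⟨y, rfl⟩, Nat.one_le_iff_ne_zero.mpr (by positivity), ?_⟩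
      calc 2 ^ n * (2 * y + 1) ≤ 2 ^ n * (2 * K) :=
            Nat.mul_le_mul_left _ (by omega)
        _ = 2 ^ (n+1) * K := by ring
        _ ≤ N := by rw [hK]; exact Nat.mul_div_le N (2^(n+1)) |>.trans_eq' (by ring_nf)
    calc K = ((Finset.range K).image (fun y => 2 ^ n * (2 * y + 1))).card := by
            rw [Finset.card_image_of_injOn hinj, Finset.card_range]
      _ = (((Finset.range K).image (fun y => 2 ^ n * (2 * y + 1)) : Finset ℕ) : Set ℕ).ncard := by
            rw [Set.ncard_coe_finset]
      _ ≤ (T ∩ I).ncard := Set.ncard_le_ncard himg (hIfin.inter_of_right _)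
  have hdisj : Disjoint (S ∩ I) (T ∩ I) := by
    rw [Set.disjoint_left]
    rintro x ⟨hxS, _⟩ ⟨⟨y, rfl⟩, _⟩
    exact hc y hxS
  have hcardsum : (S ∩ I).ncard + (T ∩ I).ncard ≤ N := by
    have hun := Set.ncard_union_eq hdisj (hIfin.inter_of_right _) (hIfin.inter_of_right _)
    have hsub : (S ∩ I) ∪ (T ∩ I) ⊆ I := by
      rintro x (⟨_, h⟩ | ⟨_, h⟩) <;> exact h
    have hle := Set.ncard_le_ncard hsub hIfin
    have hIcard : I.ncard = N := by
      rw [hI, ← Finset.coe_Icc, Set.ncard_coe_finset, Nat.card_Icc]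
      omega
    omega
  have hScard : (S ∩ I).ncard ≤ N - K := by omega
  have hKN : K ≤ N := by omega
  have hNr : (0:ℝ) < N := by exact_mod_cast hNpos
  have hds : densSeq S N ≤ ((N:ℝ) - K) / N := by
    rw [densSeq, Nat.card_coe_set_eq]
    gcongr
    · rw [← Nat.cast_sub hKN]
      exact_mod_cast hScard
  have hKnat : N < 2^(n+1) * K + 2^(n+1) := by
    have h := Nat.div_add_mod N (2^(n+1))
    have h2 : N % 2^(n+1) < 2^(n+1) := Nat.mod_lt _ (by positivity)
    rw [hK]
    linarith
  have hKreal : (N:ℝ) < P * K + P := by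
    rw [hPdef]
    exact_mod_cast hKnat
  have e1 : (1 - c/2) * N < (N:ℝ) - K := by
    have := lt_of_lt_of_le hN1 hds
    exact (lt_div_iff₀ hNr).mp this
  have e3 : (K:ℝ) < N * c / 2 := by nlinarith
  have e5 : (N:ℝ) * c - 1 < K := by nlinarith [mul_lt_mul_of_pos_right hKreal hc0]
  have e6 : (N:ℝ) * c < 2 := by linarith
  have e7 : (2:ℝ) < N * c := by nlinarith [mul_lt_mul_of_pos_right hN2 hc0]
  linarith

lemma phi_form (n y : ℕ) : phi (2 ^ n * (2 * y + 1)) = n + 1 := by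
  unfold phi
  congr 1
  haveI : Fact (Nat.Prime 2) := ⟨Nat.prime_two⟩
  rw [padicValNat.mul (by positivity) (by omega), padicValNat.prime_pow n,
    padicValNat.eq_zero_of_not_dvd (by omega)]
  omega

theorem nat_pow_primrec : Primrec₂ ((· ^ ·) : ℕ → ℕ → ℕ) :=
  Primrec₂.unpaired'.1 Nat.Primrec.pow

/-- From a computable density-one set one computably picks, for each `n`, an
element of `S` of 2-adic shape `2^n * odd`. -/
lemma exists_selector (S : Set ℕ) (hS : ComputablePred (· ∈ S))
    (hex : ∀ n, ∃ y, 2 ^ n * (2 * y + 1) ∈ S) :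
    ∃ t : ℕ → ℕ, Computable t ∧ ∀ n, t n ∈ S ∧ phi (t n) = n + 1 := by
  obtain ⟨f, hf, hfS⟩ := ComputablePred.computable_iff.mp hS
  have hex' : ∀ n, ∃ y, f (2 ^ n * (2 * y + 1)) = true := by
    intro n
    obtain ⟨y, hy⟩ := hex n
    exact ⟨y, by have := congrFun hfS (2 ^ n * (2 * y + 1)); rw [← this]; exact hy⟩
  classical
  set θ : ℕ → ℕ := fun n => Nat.find (hex' n) with hθ
  have harith : Computable₂ (fun n y : ℕ => 2 ^ n * (2 * y + 1)) := by
    apply Primrec₂.to_comp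
    exact Primrec.nat_mul.comp ((nat_pow_primrec.comp (Primrec.const 2) Primrec.fst))
      (Primrec.nat_add.comp
        (Primrec.nat_mul.comp (Primrec.const 2) Primrec.snd) (Primrec.const 1))
  have hq : Computable₂ (fun n y : ℕ => f (2 ^ n * (2 * y + 1))) :=
    hf.comp (harith : Computable₂ _)
  have hθc : Computable θ := by
    have hpr : Partrec fun n => Nat.rfind (fun y => Part.some (f (2 ^ n * (2 * y + 1)))) :=
      Partrec.rfind hq.partrec₂
    apply Partrec.of_eq_tot hpr
    intro n
    refine Nat.mem_rfind.mpr ?_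
    constructor
    · rw [Part.mem_some_iff]
      exact (Nat.find_spec (hex' n)).symm
    · intro m hm
      rw [Part.mem_some_iff]
      have := Nat.find_min (hex' n) hm
      simpa using Ne.symm this
  refine ⟨fun n => 2 ^ n * (2 * θ n + 1), harith.comp Computable.id hθc, fun n => ?_⟩
  refine ⟨?_, phi_form n (θ n)⟩
  have := congrFun hfS (2 ^ n * (2 * θ n + 1))
  simp only [this]
  exact Nat.find_spec (hex' n)

theorem stmt_9 (V : ℕ →. ℕ) (hV : Partrec V)
    (hund : ¬ ComputablePred (fun n : ℕ => (V n).Dom))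
    (U : ℕ →. ℕ) (hU : ∀ x : ℕ, U x = V (phi x)) :
    ¬ ∃ S : Set ℕ, ComputablePred (· ∈ S) ∧ HasDensity S 1 ∧
        ComputablePred (fun x : ℕ => x ∈ S ∧ (U x).Dom) := by
  rintro ⟨S, hS, hd, hcomp⟩
  classical
  obtain ⟨t, ht, hts⟩ := exists_selector S hS (density_hits S hd)
  obtain ⟨g, hg, hgeq⟩ := ComputablePred.computable_iff.mp hcomp
  -- (V (m+1)).Dom ↔ g (t m) = true
  have key : ∀ m : ℕ, (V (m+1)).Dom ↔ g (t m) = true := by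
    intro m
    have hUeq : U (t m) = V (m+1) := by rw [hU, (hts m).2]
    have h1 : (V (m+1)).Dom ↔ (t m ∈ S ∧ (U (t m)).Dom) := by
      rw [hUeq]
      exact ⟨fun h => ⟨(hts m).1, h⟩, fun h => h.2⟩
    have h2 := congrFun hgeq (t m)
    rw [h1]
    rw [h2]
  apply hund
  rw [ComputablePred.computable_iff]
  refine ⟨fun n => Nat.casesOn n (decide (V 0).Dom) (fun m => g (t m)), ?_, ?_⟩
  · exact Computable.nat_casesOn Computable.id
      (Computable.const (decide (V 0).Dom))
      (((hg.comp ht).comp Computable.snd).to₂)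
  · funext n
    cases n with
    | zero => simp
    | succ m => simpa using propext (key m)
end

section
/- If U(x) = V(φ(x)) where V is partially computable with undecidable domain and φ(n) is the largest k with 2^(k-1) ∣ n, then dom(U) has positive lower density (in particular, dom(U) is not negligible). -/
open Filter

lemma count_lb (k N : ℕ) :
    N / 2 ^ (k + 1) ≤ ((Finset.Icc 1 N).filter (fun x => padicValNat 2 x = k)).card := by
  have := Fact.mk Nat.prime_two
  calc N / 2 ^ (k + 1) = (Finset.range (N / 2 ^ (k + 1))).card := (Finset.card_range _).symm
    _ ≤ _ := by
      apply Finset.card_le_card_of_injOn (fun j => 2 ^ k * (2 * j + 1))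
      · intro j hj
        simp only [Finset.mem_coe, Finset.mem_range] at hj
        simp only [Finset.mem_coe, Finset.mem_filter, Finset.mem_Icc]
        refine ⟨⟨Nat.one_le_iff_ne_zero.2 (by positivity), ?_⟩, ?_⟩
        · have h1 : 2 * j + 1 ≤ 2 * (N / 2 ^ (k + 1)) := by omega
          calc 2 ^ k * (2 * j + 1) ≤ 2 ^ k * (2 * (N / 2 ^ (k + 1))) :=
                Nat.mul_le_mul_left _ h1
            _ = N / 2 ^ (k + 1) * 2 ^ (k + 1) := by ring
            _ ≤ N := Nat.div_mul_le_self _ _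
        · rw [padicValNat.mul (by positivity) (by omega),
            padicValNat.prime_pow k,
            padicValNat.eq_zero_of_not_dvd (by omega)]
          omega
      · intro a _ b _ h
        simp only at h
        have h2 : (0:ℕ) < 2 ^ k := by positivity
        have := Nat.eq_of_mul_eq_mul_left h2 h
        omega

theorem stmt_11 (V : ℕ →. ℕ) (hV : Partrec V)
    (hund : ¬ ComputablePred (fun n : ℕ => (V n).Dom))
    (U : ℕ →. ℕ) (hU : ∀ x : ℕ, U x = V (phi x)) :
    0 < Filter.liminf (densSeq {x : ℕ | (U x).Dom}) Filter.atTop ∧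
    ¬ HasDensity {x : ℕ | (U x).Dom} 0 := by
  -- find n ≥ 1 with (V n).Dom
  have hex : ∃ n, 1 ≤ n ∧ (V n).Dom := by
    by_contra h
    push_neg at h
    apply hund
    rcases Classical.em ((V 0).Dom) with h0 | h0
    · rw [ComputablePred.computable_iff]
      refine ⟨fun n => decide (n = 0),
        (Primrec.eq.comp Primrec.id (Primrec.const 0)).decide.to_comp, funext fun n => ?_⟩
      rw [eq_iff_iff]
      simp only [decide_eq_true_eq]
      constructor
      · intro hd
        by_contra hn
        exact h n (by omega) hd
      · rintro rfl; exact h0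
    · rw [ComputablePred.computable_iff]
      refine ⟨fun _ => false, Computable.const _, funext fun n => ?_⟩
      rw [eq_iff_iff]
      simp only [Bool.false_eq_true, iff_false]
      intro hd
      rcases Nat.eq_zero_or_pos n with rfl | hn
      · exact h0 hd
      · exact h n hn hd
  obtain ⟨n, hn1, hdom⟩ := hex
  set k := n - 1 with hk
  set A : Set ℕ := {x : ℕ | (U x).Dom} with hA
  -- key eventual bound
  have key : ∀ N : ℕ, 2 ^ (k + 2) ≤ N → (2 ^ (k + 2) : ℝ)⁻¹ ≤ densSeq A N := by
    intro N hN
    have hN0 : 0 < N := lt_of_lt_of_le (by positivity) hN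
    have hsub : ↑((Finset.Icc 1 N).filter (fun x => padicValNat 2 x = k)) ⊆ A ∩ Set.Icc 1 N := by
      intro x hx
      simp only [Finset.coe_filter, Set.mem_setOf_eq, Finset.mem_Icc] at hx
      obtain ⟨⟨hx1, hxN⟩, hval⟩ := hx
      refine ⟨?_, hx1, hxN⟩
      simp only [hA, Set.mem_setOf_eq, hU x, phi, hval]
      have hkn : k + 1 = n := by omega
      rwa [hkn]
    have hfin : (A ∩ Set.Icc 1 N).Finite :=
      Set.Finite.inter_of_right (Set.finite_Icc 1 N) A
    have hcard : ((Finset.Icc 1 N).filter (fun x => padicValNat 2 x = k)).card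
        ≤ Nat.card ↥(A ∩ Set.Icc 1 N) := by
      rw [Nat.card_coe_set_eq]
      calc _ = (↑((Finset.Icc 1 N).filter (fun x => padicValNat 2 x = k)) : Set ℕ).ncard := by
            rw [Set.ncard_coe_finset]
        _ ≤ _ := Set.ncard_le_ncard hsub hfin
    have hq : N / 2 ^ (k + 1) ≤ Nat.card ↥(A ∩ Set.Icc 1 N) := le_trans (count_lb k N) hcard
    -- real estimates
    have hq' : (N : ℝ) / 2 ^ (k + 2) ≤ ((N / 2 ^ (k + 1) : ℕ) : ℝ) := by
      have hmod : N = 2 ^ (k + 1) * (N / 2 ^ (k + 1)) + N % 2 ^ (k + 1) :=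
        (Nat.div_add_mod N (2 ^ (k + 1))).symm
      have hrem : N % 2 ^ (k + 1) < 2 ^ (k + 1) := Nat.mod_lt _ (by positivity)
      have hbig : 2 ^ (k + 1) ≤ N := le_trans (by
        have : (2:ℕ) ^ (k+1) ≤ 2 ^ (k+2) := Nat.pow_le_pow_right (by norm_num) (by omega)
        exact this) hN
      -- N < 2^(k+1) * (q + 1), and q ≥ 1 since N ≥ 2^(k+1)
      have hq1 : 1 ≤ N / 2 ^ (k + 1) := (Nat.one_le_div_iff (by positivity)).2 hbig
      have hlt : (N : ℝ) < 2 ^ (k + 1) * ((N / 2 ^ (k + 1) : ℕ) + 1) := by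
        have h3 : N < (N / 2 ^ (k + 1) + 1) * 2 ^ (k + 1) :=
          (Nat.div_lt_iff_lt_mul (by positivity)).1 (Nat.lt_succ_self _)
        have h4 : N < 2 ^ (k + 1) * (N / 2 ^ (k + 1) + 1) := by rwa [Nat.mul_comm] at h3
        exact_mod_cast h4
      have h2q : 2 ^ (k + 2) ≤ N → True := fun _ => trivial
      -- also 2^(k+1)*(q+1) ≤ 2^(k+1)*2q = 2^(k+2)*q
      have hle : ((N / 2 ^ (k + 1) : ℕ) : ℝ) + 1 ≤ 2 * ((N / 2 ^ (k + 1) : ℕ) : ℝ) := by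
        have : (1:ℝ) ≤ ((N / 2 ^ (k + 1) : ℕ) : ℝ) := by exact_mod_cast hq1
        linarith
      have : (N : ℝ) < 2 ^ (k + 2) * ((N / 2 ^ (k + 1) : ℕ) : ℝ) := by
        calc (N:ℝ) < 2 ^ (k + 1) * (((N / 2 ^ (k + 1) : ℕ) : ℝ) + 1) := hlt
          _ ≤ 2 ^ (k + 1) * (2 * ((N / 2 ^ (k + 1) : ℕ) : ℝ)) := by
              apply mul_le_mul_of_nonneg_left hle (by positivity)
          _ = 2 ^ (k + 2) * ((N / 2 ^ (k + 1) : ℕ) : ℝ) := by ring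
      rw [div_le_iff₀ (by positivity)]
      linarith
    unfold densSeq
    rw [inv_eq_one_div, div_le_div_iff₀ (by positivity) (by exact_mod_cast hN0)]
    have hcR : ((N / 2 ^ (k + 1) : ℕ) : ℝ) ≤ (Nat.card ↥(A ∩ Set.Icc 1 N) : ℝ) := by
      exact_mod_cast hq
    have := le_trans hq' hcR
    rw [div_le_iff₀ (by positivity)] at this
    linarith
  have hev : ∀ᶠ N in atTop, (2 ^ (k + 2) : ℝ)⁻¹ ≤ densSeq A N :=
    eventually_atTop.2 ⟨2 ^ (k + 2), key⟩
  have hpos : 0 < Filter.liminf (densSeq A) Filter.atTop := by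
    have hlim : (2 ^ (k + 2) : ℝ)⁻¹ ≤ Filter.liminf (densSeq A) Filter.atTop := by
      have hub : ∀ N, densSeq A N ≤ 1 := by
        intro N
        unfold densSeq
        rcases Nat.eq_zero_or_pos N with rfl | hNp
        · simp
        · rw [div_le_one (by exact_mod_cast hNp)]
          have h1 : Nat.card ↥(A ∩ Set.Icc 1 N) ≤ Nat.card ↥(Set.Icc 1 N) :=
            Nat.card_mono (Set.finite_Icc 1 N).to_subtype
              (fun x hx => hx.2)
          have h2 : Nat.card ↥(Set.Icc (1:ℕ) N) = N := by
            rw [Nat.card_coe_set_eq, Set.ncard_eq_toFinset_card', Set.toFinset_Icc,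
              Nat.card_Icc]; omega
          exact_mod_cast h2 ▸ h1
      apply Filter.le_liminf_of_le _ hev
      exact (Filter.isBoundedUnder_of ⟨1, hub⟩).isCoboundedUnder_ge
    exact lt_of_lt_of_le (by positivity) hlim
  refine ⟨hpos, fun hd => ?_⟩
  have := hd.liminf_eq
  rw [this] at hpos
  exact lt_irrefl _ hpos
end

section
/- Every programmable universal function is universal: if U is partially computable and for every partially computable F there is a constant k such that for all x there exists y ≤ k·x with U(y) = F(x), then there exists a partially computable C_U : ℤ⁺ × ℤ⁺ → ℤ⁺ such that for every partially computable F there are constants g, c with U(C_U(g,x)) = F(x) and C_U(g,x) ≤ c·x for all x. -/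
open Filter

open Nat.Partrec (Code)
open Nat.Partrec.Code Encodable

theorem stmt_16 (U : ℕ →. ℕ) (hU : Partrec U)
    (hprog : ∀ F : ℕ →. ℕ, Partrec F →
      ∃ k : ℕ, ∀ x : ℕ, 1 ≤ x → ∃ y : ℕ, y ≤ k * x ∧ U y = F x) :
    ∃ C : ℕ → ℕ →. ℕ, Partrec₂ C ∧
      ∀ F : ℕ →. ℕ, Partrec F → ∃ g c : ℕ, ∀ x : ℕ, 1 ≤ x →
        (C g x).bind U = F x ∧ ∀ y ∈ C g x, y ≤ c * x := by
  obtain ⟨cU, hcU⟩ := Code.exists_code.1 (Partrec.nat_iff.1 hU)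
  set f : (ℕ × ℕ) × ℕ → ℕ → Option ℕ := fun p n =>
    if n.unpair.1 ≤ p.1.1.unpair.2 * p.1.2 ∧ evaln n.unpair.2 cU n.unpair.1 = some p.2
    then some n.unpair.1 else none with hfdef
  have hf : Computable₂ f := by
    have : Primrec fun q : ((ℕ × ℕ) × ℕ) × ℕ =>
        if q.2.unpair.1 ≤ q.1.1.1.unpair.2 * q.1.1.2 ∧
            evaln q.2.unpair.2 cU q.2.unpair.1 = some q.1.2
        then some q.2.unpair.1 else none := by
      have hy : Primrec fun q : ((ℕ × ℕ) × ℕ) × ℕ => q.2.unpair.1 :=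
        Primrec.fst.comp (Primrec.unpair.comp Primrec.snd)
      have ht : Primrec fun q : ((ℕ × ℕ) × ℕ) × ℕ => q.2.unpair.2 :=
        Primrec.snd.comp (Primrec.unpair.comp Primrec.snd)
      have hkx : Primrec fun q : ((ℕ × ℕ) × ℕ) × ℕ => q.1.1.1.unpair.2 * q.1.1.2 :=
        Primrec.nat_mul.comp
          (Primrec.snd.comp (Primrec.unpair.comp
            (Primrec.fst.comp (Primrec.fst.comp Primrec.fst))))
          (Primrec.snd.comp (Primrec.fst.comp Primrec.fst))
      have heval : Primrec fun q : ((ℕ × ℕ) × ℕ) × ℕ => evaln q.2.unpair.2 cU q.2.unpair.1 :=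
        primrec_evaln.comp ((ht.pair (Primrec.const cU)).pair hy)
      have hcond : PrimrecPred fun q : ((ℕ × ℕ) × ℕ) × ℕ =>
          q.2.unpair.1 ≤ q.1.1.1.unpair.2 * q.1.1.2 ∧
            evaln q.2.unpair.2 cU q.2.unpair.1 = some q.1.2 :=
        (Primrec.nat_le.comp hy hkx).and
          (Primrec.eq.comp heval
            (Primrec.option_some.comp (Primrec.snd.comp Primrec.fst)))
      exact Primrec.ite hcond (Primrec.option_some.comp hy) (Primrec.const none)
    exact this.to_comp
  refine ⟨fun g x => ((Denumerable.ofNat Code g.unpair.1).eval x).bind fun v =>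
    Nat.rfindOpt (f ((g, x), v)), ?_, ?_⟩
  · have h1 : Partrec fun p : ℕ × ℕ => (Denumerable.ofNat Code p.1.unpair.1).eval p.2 :=
      eval_part.comp
        ((Computable.ofNat Code).comp
          (Computable.fst.comp (Primrec.unpair.to_comp.comp Computable.fst)))
        Computable.snd
    have h2 : Partrec₂ fun (p : ℕ × ℕ) (v : ℕ) => Nat.rfindOpt (f ((p.1, p.2), v)) :=
      Partrec.rfindOpt hf
    exact h1.bind h2
  · intro F hF
    obtain ⟨k, hk⟩ := hprog F hF
    obtain ⟨cF, hcF⟩ := Code.exists_code.1 (Partrec.nat_iff.1 hF)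
    refine ⟨Nat.pair (encode cF) k, k, fun x hx => ?_⟩
    have hg1 : (Nat.pair (encode cF) k).unpair = (encode cF, k) := Nat.unpair_pair _ _
    set g := Nat.pair (encode cF) k with hg
    have hC : (((Denumerable.ofNat Code g.unpair.1).eval x).bind fun v =>
        Nat.rfindOpt (f ((g, x), v))) =
        (F x).bind fun v => Nat.rfindOpt (f ((g, x), v)) := by
      rw [hg, hg1]
      simp [Denumerable.ofNat_encode, hcF]
    constructor
    · show (((Denumerable.ofNat Code g.unpair.1).eval x).bind fun v =>
        Nat.rfindOpt (f ((g, x), v))).bind U = F x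
      rw [hC]
      ext a
      refine (Part.mem_bind_iff.trans (exists_congr fun _ => and_congr_left fun _ => Part.mem_bind_iff)).trans ?_
      constructor
      · rintro ⟨y, ⟨v, hvF, hyr⟩, haU⟩
        obtain ⟨n, hn⟩ := Nat.rfindOpt_spec hyr
        simp only [hfdef] at hn
        split_ifs at hn with hc
        · obtain ⟨-, hev⟩ := hc
          have hy : y = n.unpair.1 := by simpa using hn.symm
          have hvU : v ∈ U n.unpair.1 := by
            rw [← hcU]; exact evaln_sound (Option.mem_def.mpr hev)
          rw [hy] at haU
          rwa [Part.mem_unique haU hvU]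
        · simp at hn
      · intro haF
        obtain ⟨y0, hy0le, hy0U⟩ := hk x hx
        have haU : a ∈ U y0 := hy0U ▸ haF
        obtain ⟨t, ht⟩ := evaln_complete.1 (by rw [hcU]; exact haU)
        have hdom : (Nat.rfindOpt (f ((g, x), a))).Dom := by
          rw [Nat.rfindOpt_dom]
          refine ⟨Nat.pair y0 t, y0, ?_⟩
          simp only [hfdef, Nat.unpair_pair]
          rw [if_pos ⟨by simpa [hg, hg1] using hy0le, by simpa using ht⟩]
          rfl
        set y := (Nat.rfindOpt (f ((g, x), a))).get hdom with hydef
        have hyr : y ∈ Nat.rfindOpt (f ((g, x), a)) := Part.get_mem hdom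
        obtain ⟨n, hn⟩ := Nat.rfindOpt_spec hyr
        simp only [hfdef] at hn
        split_ifs at hn with hc
        · obtain ⟨-, hev⟩ := hc
          have hy : y = n.unpair.1 := by simpa using hn.symm
          have haU' : a ∈ U y := by
            rw [hy, ← hcU]; exact evaln_sound (Option.mem_def.mpr hev)
          exact ⟨y, ⟨a, haF, hyr⟩, haU'⟩
        · simp at hn
    · intro y hy
      have hy2 : y ∈ (F x).bind fun v => Nat.rfindOpt (f ((g, x), v)) := by
        rw [← hC]; exact hy
      simp only [Part.mem_bind_iff] at hy2
      obtain ⟨v, -, hyr⟩ := hy2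
      obtain ⟨n, hn⟩ := Nat.rfindOpt_spec hyr
      simp only [hfdef] at hn
      split_ifs at hn with hc
      · obtain ⟨hle, -⟩ := hc
        have hy' : y = n.unpair.1 := by simpa using hn.symm
        rw [hy']
        simpa [hg, hg1] using hle
      · simp at hn
end

section
/- There exist sets of positive integers that are almost decidable but not decidable; in fact, there are infinitely many such sets. Concretely, if H is any undecidable computably enumerable set and P = {y² : y ∈ ℤ⁺}, then the set {y² : y ∈ H} is almost decidable (via the generic computable set of non-squares) but not decidable. -/
open Filter

/-! ### Auxiliary lemmas -/

lemma aux_sq_iff (x : ℕ) :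
    (∃ y : ℕ, 1 ≤ y ∧ y * y = x) ↔ 1 ≤ x ∧ Nat.sqrt x * Nat.sqrt x = x := by
  constructor
  · rintro ⟨y, hy, rfl⟩
    exact ⟨Nat.one_le_iff_ne_zero.2 (by positivity), by rw [Nat.sqrt_eq]⟩
  · rintro ⟨hx, h⟩
    refine ⟨Nat.sqrt x, ?_, h⟩
    rcases Nat.eq_zero_or_pos (Nat.sqrt x) with h0 | h0
    · rw [Nat.sqrt_eq_zero] at h0; omega
    · exact h0

lemma aux_compPred_sq : ComputablePred (fun x : ℕ => ∃ y : ℕ, 1 ≤ y ∧ y * y = x) := by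
  classical
  have hp : PrimrecPred (fun x : ℕ => 1 ≤ x ∧ Nat.sqrt x * Nat.sqrt x = x) :=
    (Primrec.nat_le.comp (Primrec.const 1) Primrec.id).and
      (Primrec.eq.comp (Primrec.nat_mul.comp Primrec.nat_sqrt Primrec.nat_sqrt) Primrec.id)
  have hcp : ComputablePred (fun x : ℕ => 1 ≤ x ∧ Nat.sqrt x * Nat.sqrt x = x) :=
    hp.computablePred
  exact hcp.of_eq fun x => (aux_sq_iff x).symm

lemma aux_compPred_nonsq : ComputablePred (fun x : ℕ => ¬ ∃ y : ℕ, 1 ≤ y ∧ y * y = x) :=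
  aux_compPred_sq.not

lemma aux_compPred_R :
    ComputablePred (fun x : ℕ => x ∈ {x : ℕ | 1 ≤ x ∧ ¬ ∃ y : ℕ, 1 ≤ y ∧ y * y = x}) := by
  classical
  have hp : PrimrecPred (fun x : ℕ => 1 ≤ x ∧ ¬ (Nat.sqrt x * Nat.sqrt x = x)) :=
    (Primrec.nat_le.comp (Primrec.const 1) Primrec.id).and
      ((Primrec.eq.comp (Primrec.nat_mul.comp Primrec.nat_sqrt Primrec.nat_sqrt) Primrec.id).not)
  have hcp : ComputablePred (fun x : ℕ => 1 ≤ x ∧ ¬ (Nat.sqrt x * Nat.sqrt x = x)) :=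
    hp.computablePred
  refine hcp.of_eq fun x => ?_
  simp only [Set.mem_setOf_eq, aux_sq_iff]
  tauto

lemma aux_compPred_comp {α β} [Primcodable α] [Primcodable β] {p : β → Prop} {f : α → β}
    (hp : ComputablePred p) (hf : Computable f) : ComputablePred fun a => p (f a) := by
  obtain ⟨g, hg, rfl⟩ := ComputablePred.computable_iff.1 hp
  exact ComputablePred.computable_iff.2 ⟨fun a => g (f a), hg.comp hf, rfl⟩

lemma aux_compPred_and {α} [Primcodable α] {p q : α → Prop}
    (hp : ComputablePred p) (hq : ComputablePred q) : ComputablePred fun a => p a ∧ q a := by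
  obtain ⟨f, hf, rfl⟩ := ComputablePred.computable_iff.1 hp
  obtain ⟨g, hg, rfl⟩ := ComputablePred.computable_iff.1 hq
  refine ComputablePred.computable_iff.2 ⟨fun a => f a && g a,
    (Primrec.and.to_comp.comp hf hg), ?_⟩
  funext a
  simp [Bool.and_eq_true]

lemma aux_compPred_false {α} [Primcodable α] : ComputablePred fun _ : α => False :=
  ComputablePred.computable_iff.2 ⟨fun _ => false, Computable.const _, by simp⟩

lemma aux_compPred_eq_const (c : ℕ) : ComputablePred fun x : ℕ => x = c := by
  classical
  exact (Primrec.eq.comp Primrec.id (Primrec.const c)).computablePred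

/-- Cardinality of positive nonsquares up to `N`. -/
lemma aux_card_nonsq (N : ℕ) :
    Nat.card ↥({x : ℕ | 1 ≤ x ∧ ¬ ∃ y : ℕ, 1 ≤ y ∧ y * y = x} ∩ Set.Icc 1 N)
      = N - Nat.sqrt N := by
  classical
  have hset : {x : ℕ | 1 ≤ x ∧ ¬ ∃ y : ℕ, 1 ≤ y ∧ y * y = x} ∩ Set.Icc 1 N
      = ↑((Finset.Icc 1 N).filter fun x => ¬ Nat.sqrt x * Nat.sqrt x = x) := by
    ext x
    simp only [Set.mem_inter_iff, Set.mem_setOf_eq, Set.mem_Icc, Finset.coe_filter,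
      Finset.mem_Icc, aux_sq_iff]
    tauto
  rw [hset, Nat.card_coe_set_eq, Set.ncard_coe_finset]
  have hsplit := Finset.card_filter_add_card_filter_not
    (s := Finset.Icc 1 N) (p := fun x => Nat.sqrt x * Nat.sqrt x = x)
  have himg : (Finset.Icc 1 N).filter (fun x => Nat.sqrt x * Nat.sqrt x = x)
      = (Finset.Icc 1 (Nat.sqrt N)).image fun y => y * y := by
    ext x
    simp only [Finset.mem_filter, Finset.mem_Icc, Finset.mem_image]
    constructor
    · rintro ⟨⟨h1, h2⟩, h3⟩
      refine ⟨Nat.sqrt x, ⟨?_, Nat.sqrt_le_sqrt h2⟩, h3⟩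
      rcases Nat.eq_zero_or_pos (Nat.sqrt x) with h0 | h0
      · rw [Nat.sqrt_eq_zero] at h0; omega
      · exact h0
    · rintro ⟨y, ⟨hy1, hy2⟩, rfl⟩
      exact ⟨⟨Nat.one_le_iff_ne_zero.2 (by positivity),
        le_trans (Nat.mul_le_mul hy2 hy2) (Nat.sqrt_le N)⟩, by rw [Nat.sqrt_eq]⟩
  have hinj : Function.Injective fun y : ℕ => y * y := fun a b h => by
    simpa [Nat.mul_self_inj] using h
  have hcard : ((Finset.Icc 1 N).filter fun x => Nat.sqrt x * Nat.sqrt x = x).card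
      = Nat.sqrt N := by
    rw [himg, Finset.card_image_of_injective _ hinj, Nat.card_Icc]; omega
  have hIcc : (Finset.Icc 1 N).card = N := by rw [Nat.card_Icc]; omega
  omega

lemma aux_dens_nonsq :
    HasDensity {x : ℕ | 1 ≤ x ∧ ¬ ∃ y : ℕ, 1 ≤ y ∧ y * y = x} 1 := by
  unfold HasDensity
  have hsqrt_top : Tendsto (fun N : ℕ => (Nat.sqrt N : ℝ)) atTop atTop :=
    tendsto_natCast_atTop_atTop.comp
      (tendsto_atTop_atTop.2 fun b => ⟨b * b, fun a ha => Nat.le_sqrt.2 ha⟩)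
  have hinv : Tendsto (fun N : ℕ => ((Nat.sqrt N : ℝ))⁻¹) atTop (nhds 0) :=
    hsqrt_top.inv_tendsto_atTop
  have hle : ∀ N : ℕ, (Nat.sqrt N : ℝ) / N ≤ ((Nat.sqrt N : ℝ))⁻¹ := by
    intro N
    rcases Nat.eq_zero_or_pos N with rfl | hN
    · simp
    have hs : 1 ≤ Nat.sqrt N := Nat.le_sqrt.2 (by omega)
    rw [div_le_iff₀ (by exact_mod_cast hN), inv_mul_eq_div, le_div_iff₀ (by exact_mod_cast hs)]
    exact_mod_cast Nat.sqrt_le N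
  have h2 : Tendsto (fun N : ℕ => (Nat.sqrt N : ℝ) / N) atTop (nhds 0) :=
    squeeze_zero (fun N => by positivity) hle hinv
  have h3 : Tendsto (fun N : ℕ => 1 - (Nat.sqrt N : ℝ) / N) atTop (nhds 1) := by
    simpa using (tendsto_const_nhds (x := (1 : ℝ)) (f := atTop)).sub h2
  refine h3.congr' ?_
  filter_upwards [eventually_ge_atTop 1] with N hN
  unfold densSeq
  rw [aux_card_nonsq, Nat.cast_sub (Nat.sqrt_le_self N), sub_div,
    div_self (Nat.cast_ne_zero.2 (by omega) : (N : ℝ) ≠ 0)]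

lemma aux_nonsq_pow (k : ℕ) : ¬ ∃ y : ℕ, y * y = 2 ^ (2 * k + 1) := by
  rintro ⟨y, hy⟩
  have hpos : 0 < 2 ^ (2 * k + 1) := Nat.pow_pos (by norm_num)
  have hy0 : y ≠ 0 := by rintro rfl; rw [Nat.zero_mul] at hy; omega
  have h1 : padicValNat 2 (y * y) = padicValNat 2 y + padicValNat 2 y :=
    padicValNat.mul hy0 hy0
  have h2 : padicValNat 2 (2 ^ (2 * k + 1)) = 2 * k + 1 := by
    simpa using padicValNat.prime_pow (p := 2) (2 * k + 1)
  rw [hy] at h1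
  omega

lemma aux_sq_set_undec (H : Set ℕ) (hH : ¬ ComputablePred (· ∈ H)) :
    ¬ ComputablePred (· ∈ {z : ℕ | ∃ y ∈ H, y * y = z}) := by
  intro hc
  apply hH
  have := aux_compPred_comp hc (Primrec.nat_mul.comp Primrec.id Primrec.id).to_comp
  refine this.of_eq fun n => ?_
  simp only [Set.mem_setOf_eq]
  constructor
  · rintro ⟨y, hy, h⟩
    rwa [show y = n from Nat.mul_self_inj.1 h] at hy
  · exact fun h => ⟨n, h, rfl⟩

/-- Main package for a fixed undecidable set `H`. -/
lemma aux_main (H : Set ℕ) (hH : ¬ ComputablePred (· ∈ H)) :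
    ComputablePred (fun x : ℕ => ¬ ∃ y : ℕ, 1 ≤ y ∧ y * y = x) ∧
    HasDensity {x : ℕ | 1 ≤ x ∧ ¬ ∃ y : ℕ, 1 ≤ y ∧ y * y = x} 1 ∧
    ComputablePred (fun x : ℕ =>
      (¬ ∃ y : ℕ, 1 ≤ y ∧ y * y = x) ∧ x ∈ {z : ℕ | ∃ y ∈ H, y * y = z}) ∧
    AlmostDecidable {z : ℕ | ∃ y ∈ H, y * y = z} ∧
    ¬ ComputablePred (· ∈ {z : ℕ | ∃ y ∈ H, y * y = z}) := by
  classical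
  refine ⟨aux_compPred_nonsq, aux_dens_nonsq, ?_, ?_, aux_sq_set_undec H hH⟩
  · -- intersection with non-squares is {0} ∩ H-dependent, computable
    have key : ∀ x : ℕ,
        ((¬ ∃ y : ℕ, 1 ≤ y ∧ y * y = x) ∧ x ∈ {z : ℕ | ∃ y ∈ H, y * y = z})
          ↔ (x = 0 ∧ 0 ∈ H) := by
      intro x
      constructor
      · rintro ⟨hns, y, hy, rfl⟩
        rcases Nat.eq_zero_or_pos y with rfl | hy1
        · simpa using hy
        · exact absurd ⟨y, hy1, rfl⟩ hns
      · rintro ⟨rfl, h0⟩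
        refine ⟨?_, ⟨0, h0, rfl⟩⟩
        rintro ⟨y, hy1, hy⟩
        rcases Nat.mul_eq_zero.1 hy with h | h <;> omega
    by_cases h0 : 0 ∈ H
    · exact (aux_compPred_eq_const 0).of_eq fun x => by rw [key x]; simp [h0]
    · exact aux_compPred_false.of_eq fun x => by rw [key x]; simp [h0]
  · refine ⟨{x : ℕ | 1 ≤ x ∧ ¬ ∃ y : ℕ, 1 ≤ y ∧ y * y = x}, aux_compPred_R,
      aux_dens_nonsq, ?_⟩
    refine aux_compPred_false.of_eq fun x => ?_
    simp only [false_iff, Set.mem_setOf_eq]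
    rintro ⟨⟨hx1, hns⟩, y, hy, rfl⟩
    rcases Nat.eq_zero_or_pos y with rfl | hy1
    · simp at hx1
    · exact hns ⟨y, hy1, rfl⟩

theorem stmt_19 :
    {S : Set ℕ | AlmostDecidable S ∧ ¬ ComputablePred (· ∈ S)}.Infinite ∧
    ∀ H : Set ℕ,
      (∃ F : ℕ →. ℕ, Partrec F ∧ H = {n : ℕ | (F n).Dom}) →
      ¬ ComputablePred (· ∈ H) →
      (ComputablePred (fun x : ℕ => ¬ ∃ y : ℕ, 1 ≤ y ∧ y * y = x) ∧
       HasDensity {x : ℕ | 1 ≤ x ∧ ¬ ∃ y : ℕ, 1 ≤ y ∧ y * y = x} 1 ∧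
       ComputablePred (fun x : ℕ =>
         (¬ ∃ y : ℕ, 1 ≤ y ∧ y * y = x) ∧ x ∈ {z : ℕ | ∃ y ∈ H, y * y = z}) ∧
       AlmostDecidable {z : ℕ | ∃ y ∈ H, y * y = z} ∧
       ¬ ComputablePred (· ∈ {z : ℕ | ∃ y ∈ H, y * y = z})) := by
  constructor
  · -- infinitely many almost decidable undecidable sets
    classical
    -- an undecidable set of naturals from the halting problem
    set H₀ : Set ℕ :=
      {n : ℕ | (Nat.Partrec.Code.eval (Denumerable.ofNat Nat.Partrec.Code n) 0).Dom} with hH₀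
    have hH₀undec : ¬ ComputablePred (· ∈ H₀) := by
      intro hc
      apply ComputablePred.halting_problem 0
      have := aux_compPred_comp hc (Computable.encode (α := Nat.Partrec.Code))
      refine this.of_eq fun c => ?_
      simp [hH₀, Set.mem_setOf_eq]
    set S₀ : Set ℕ := {z : ℕ | ∃ y ∈ H₀, y * y = z} with hS₀
    have hS₀sub : ∀ x ∈ S₀, ∃ y : ℕ, y * y = x := by
      rintro x ⟨y, _, rfl⟩; exact ⟨y, rfl⟩
    have hS₀undec : ¬ ComputablePred (· ∈ S₀) := aux_sq_set_undec H₀ hH₀undec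
    -- the family
    set f : ℕ → Set ℕ := fun k => S₀ ∪ {2 ^ (2 * k + 1)} with hf
    refine Set.infinite_of_injective_forall_mem (f := f) ?_ ?_
    · -- injective
      intro a b hab
      have hmem : (2 : ℕ) ^ (2 * a + 1) ∈ f b := hab ▸ Set.mem_union_right _ rfl
      rcases hmem with h | h
      · exact absurd (hS₀sub _ h) (aux_nonsq_pow a)
      · have : 2 * a + 1 = 2 * b + 1 :=
          Nat.pow_right_injective (by norm_num) (Set.mem_singleton_iff.1 h)
        omega
    · intro k
      constructor
      · -- AlmostDecidable (f k)
        refine ⟨{x : ℕ | 1 ≤ x ∧ ¬ ∃ y : ℕ, 1 ≤ y ∧ y * y = x}, aux_compPred_R,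
          aux_dens_nonsq, ?_⟩
        refine (aux_compPred_eq_const (2 ^ (2 * k + 1))).of_eq fun x => ?_
        constructor
        · rintro rfl
          refine ⟨⟨Nat.one_le_iff_ne_zero.2 (by positivity), fun ⟨y, _, hy⟩ =>
            aux_nonsq_pow k ⟨y, hy⟩⟩, Set.mem_union_right _ rfl⟩
        · rintro ⟨⟨hx1, hns⟩, hmem⟩
          rcases hmem with h | h
          · obtain ⟨y, hy, rfl⟩ := h
            rcases Nat.eq_zero_or_pos y with rfl | hy1
            · simp at hx1
            · exact absurd ⟨y, hy1, rfl⟩ hns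
          · exact h
      · -- not decidable
        intro hc
        apply hS₀undec
        have hne : ComputablePred fun x : ℕ => ¬ (x = 2 ^ (2 * k + 1)) :=
          (aux_compPred_eq_const _).not
        have := aux_compPred_and hc hne
        refine this.of_eq fun x => ?_
        constructor
        · rintro ⟨hm, hne'⟩
          rcases hm with h | h
          · exact h
          · exact absurd h hne'
        · intro hx
          refine ⟨Set.mem_union_left _ hx, fun heq => ?_⟩
          exact aux_nonsq_pow k (heq ▸ hS₀sub _ hx)
  · intro H _ hH
    exact aux_main H hH
end
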